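/- If two finite sequences over an alphabet have Levenshtein (edit) distance exactly d, then the Euclidean distance between their bag-of-letters count vectors is at most √2·d. -/

import Mathlib

set_option maxRecDepth 4000

namespace Levenshtein

/-- A cost structure for the Levenshtein edit distance (as in the former Mathlib). -/
structure Cost (α β δ : Type*) where
  /-- Cost to delete an element from a list. -/
  delete : α → δ
  /-- Cost in insert an element into a list. -/
  insert : β → δ
  /-- Cost to substitute one element for another in a list. -/
  substitute : α → β → δ

/-- The default cost structure, for which all operations cost `1`. -/
def defaultCost {α : Type*} [DecidableEq α] : Cost α α ℕ where
  delete _ := 1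
  insert _ := 1
  substitute a b := if a = b then 0 else 1

/-- (Implementation detail for `levenshtein`.) -/
def impl {α β δ : Type*} [AddZeroClass δ] [Min δ] (C : Cost α β δ)
    (xs : List α) (y : β) (d : {r : List δ // 0 < r.length}) : {r : List δ // 0 < r.length} :=
  let ⟨ds, w⟩ := d
  xs.zip (ds.zip ds.tail) |>.foldr
    (init := ⟨[C.insert y + ds.getLast (List.length_pos_iff.mp w)], by simp⟩)
    (fun ⟨x, d₀, d₁⟩ ⟨r, w⟩ =>
      ⟨min (C.delete x + r[0]) (min (C.insert y + d₀) (C.substitute x y + d₁)) :: r, by simp⟩)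

end Levenshtein

open Levenshtein

/-- `suffixLevenshtein C xs ys` computes the Levenshtein distance
(using the cost functions provided by a `C : Cost α β δ`)
from each suffix of the list `xs` to the list `ys`. -/
def suffixLevenshtein {α β δ : Type*} [AddZeroClass δ] [Min δ] (C : Levenshtein.Cost α β δ)
    (xs : List α) (ys : List β) : {r : List δ // 0 < r.length} :=
  ys.foldr
    (impl C xs)
    (xs.foldr (init := ⟨[0], by simp⟩) (fun a ⟨ds, _⟩ => ⟨(C.delete a + ds[0]) :: ds, by simp⟩))

/-- `levenshtein C xs ys` computes the Levenshtein distance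
(using the cost functions provided by a `C : Cost α β δ`)
from the list `xs` to the list `ys`. -/
def levenshtein {α β δ : Type*} [AddZeroClass δ] [Min δ] (C : Levenshtein.Cost α β δ)
    (xs : List α) (ys : List β) : δ :=
  let ⟨r, _⟩ := suffixLevenshtein C xs ys
  r[0]


section LevAux
variable {α β δ : Type*} (C : Levenshtein.Cost α β δ) [AddZeroClass δ] [Min δ]

theorem Levenshtein.defaultCost_insert {α' : Type*} [DecidableEq α'] (a : α') :
    (Levenshtein.defaultCost : Levenshtein.Cost α' α' ℕ).insert a = 1 := rfl

theorem Levenshtein.defaultCost_delete {α' : Type*} [DecidableEq α'] (a : α') :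
    (Levenshtein.defaultCost : Levenshtein.Cost α' α' ℕ).delete a = 1 := rfl

theorem Levenshtein.defaultCost_substitute {α' : Type*} [DecidableEq α'] (a b : α') :
    (Levenshtein.defaultCost : Levenshtein.Cost α' α' ℕ).substitute a b = if a = b then 0 else 1 := rfl

theorem lev_impl_cons_fst_zero (x : α) (xs : List α) (y : β) (d : δ) (ds : List δ) (w) (h)
    (w' : 0 < List.length ds) :
    (impl C (x :: xs) y ⟨d :: ds, w⟩).1[0]'h =
      let ⟨r, w⟩ := impl C xs y ⟨ds, w'⟩
      min (C.delete x + r[0]) (min (C.insert y + d) (C.substitute x y + ds[0])) :=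
  match ds, w' with | _ :: _, _ => rfl

theorem lev_impl_length (xs : List α) (y : β) (d : {r : List δ // 0 < r.length})
    (w : d.1.length = xs.length + 1) :
    (impl C xs y d).1.length = xs.length + 1 := by
  induction xs generalizing d with
  | nil => rfl
  | cons x xs ih =>
    dsimp [impl]
    match d, w with
    | ⟨d₁ :: d₂ :: ds, _⟩, w =>
      dsimp
      congr 1
      exact ih ⟨d₂ :: ds, (by simp)⟩ (by simpa using w)

theorem lev_suffixLevenshtein_length (xs : List α) (ys : List β) :
    (suffixLevenshtein C xs ys).1.length = xs.length + 1 := by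
  induction ys with
  | nil =>
    dsimp [suffixLevenshtein]
    induction xs with
    | nil => rfl
    | cons _ xs ih =>
      simp_all
  | cons y ys ih =>
    dsimp [suffixLevenshtein]
    rw [lev_impl_length]
    exact ih

theorem lev_suffixLevenshtein_cons₂ (xs : List α) (y : β) (ys : List β) :
    suffixLevenshtein C xs (y :: ys) = (impl C xs) y (suffixLevenshtein C xs ys) :=
  rfl

theorem lev_suffixLevenshtein_cons₁_aux {α : Type*} {x y : {r : List α // 0 < r.length}}
    (w₀ : x.1[0]'x.2 = y.1[0]'y.2) (w : x.1.tail = y.1.tail) : x = y := by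
  match x, y with
  | ⟨hx :: tx, _⟩, ⟨hy :: ty, _⟩ => simp_all

theorem lev_suffixLevenshtein_cons₁ (x : α) (xs : List α) (ys : List β) :
    suffixLevenshtein C (x :: xs) ys =
      ⟨levenshtein C (x :: xs) ys ::
        (suffixLevenshtein C xs ys).1, by simp⟩ := by
  induction ys with
  | nil =>
    dsimp [levenshtein, suffixLevenshtein]
    rfl
  | cons y ys ih =>
    apply lev_suffixLevenshtein_cons₁_aux
    · rfl
    · rw [lev_suffixLevenshtein_cons₂ C (x :: xs), ih, lev_suffixLevenshtein_cons₂ C xs]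
      have hl : 0 < (suffixLevenshtein C xs ys).1.length := by
        simp [lev_suffixLevenshtein_length]
      obtain ⟨ds, hds⟩ := suffixLevenshtein C xs ys
      match ds, hl with
      | _ :: _, _ => rfl

theorem levenshtein_nil_cons (y : β) (ys : List β) :
    levenshtein C [] (y :: ys) = C.insert y + levenshtein C [] ys := by
  dsimp +zetaDelta [levenshtein, suffixLevenshtein, impl]
  congr
  rw [List.getLast_eq_getElem]
  have key : ∀ (L : List δ), L.length = 1 → ∀ h1 h2, L[L.length - 1]'h1 = L[0]'h2 := by
    rintro (_|⟨a,_|_⟩) h <;> simp_all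
  show C.insert y + _ = _
  congr 1
  exact key _ (lev_suffixLevenshtein_length C [] ys) _ _

theorem levenshtein_cons_nil (x : α) (xs : List α) :
    levenshtein C (x :: xs) ([] : List β) = C.delete x + levenshtein C xs ([] : List β) :=
  rfl

theorem levenshtein_cons_cons (x : α) (xs : List α) (y : β) (ys : List β) :
    levenshtein C (x :: xs) (y :: ys) =
      min (C.delete x + levenshtein C xs (y :: ys))
        (min (C.insert y + levenshtein C (x :: xs) ys)
          (C.substitute x y + levenshtein C xs ys)) := by
  show (suffixLevenshtein C (x :: xs) (y :: ys)).1[0]'(by simp [lev_suffixLevenshtein_length]) = _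
  conv =>
    lhs
    dsimp only [lev_suffixLevenshtein_cons₂]
  simp only [lev_suffixLevenshtein_cons₁]
  rw [lev_impl_cons_fst_zero (w' := by simp [lev_suffixLevenshtein_length])]
  rfl

end LevAux

open RealInnerProductSpace

private noncomputable def cntVec {σ : Type*} [Fintype σ] [DecidableEq σ] (w : List σ) :
    EuclideanSpace ℝ σ := WithLp.toLp 2 (fun a => (w.count a : ℝ))

private lemma cntVec_cons {σ : Type*} [Fintype σ] [DecidableEq σ] (a : σ) (w : List σ) :
    cntVec (a :: w) = cntVec w + EuclideanSpace.single a 1 := by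
  ext c
  simp only [cntVec, PiLp.toLp_apply, List.count_cons, PiLp.add_apply, EuclideanSpace.single_apply, beq_iff_eq]
  push_cast
  by_cases h : c = a
  · simp [h]
  · simp [h, Ne.symm h]

private lemma single_sub_single_norm {σ : Type*} [Fintype σ] [DecidableEq σ] (a b : σ) :
    ‖(EuclideanSpace.single a (1:ℝ) : EuclideanSpace ℝ σ) - EuclideanSpace.single b 1‖
      ≤ Real.sqrt 2 := by
  by_cases hab : a = b
  · subst hab; simp
  · have h2 : ‖(EuclideanSpace.single a (1:ℝ) : EuclideanSpace ℝ σ) -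
        EuclideanSpace.single b 1‖ ^ 2 = 2 := by
      rw [norm_sub_sq_real]
      have hi : ⟪(EuclideanSpace.single a (1:ℝ) : EuclideanSpace ℝ σ),
          EuclideanSpace.single b 1⟫ = 0 := by
        rw [EuclideanSpace.inner_single_left]
        simp [EuclideanSpace.single_apply, hab]
      rw [hi]
      simp [EuclideanSpace.norm_single]
      ring
    exact le_of_eq (by rw [← Real.sqrt_sq (norm_nonneg _), h2])

private lemma one_le_sqrt_two : (1:ℝ) ≤ Real.sqrt 2 := by
  rw [show (1:ℝ) = Real.sqrt 1 by simp]
  exact Real.sqrt_le_sqrt (by norm_num)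

private lemma key_bound {σ : Type*} [Fintype σ] [DecidableEq σ] :
    ∀ n (x y : List σ), x.length + y.length ≤ n →
      dist (cntVec x) (cntVec y)
        ≤ Real.sqrt 2 * ((levenshtein Levenshtein.defaultCost x y : ℕ) : ℝ) := by
  intro n
  induction n with
  | zero =>
    rintro (_|⟨a,x⟩) (_|⟨b,y⟩) hn <;> simp_all
  | succ n ih =>
    have hs2 : (0:ℝ) ≤ Real.sqrt 2 := Real.sqrt_nonneg 2
    rintro (_|⟨a,x⟩) (_|⟨b,y⟩) hn
    · simp
    · -- nil, cons
      have hy : ([] : List σ).length + y.length ≤ n := by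
        simp only [List.length_nil, List.length_cons] at hn ⊢; omega
      calc dist (cntVec ([] : List σ)) (cntVec (b :: y))
          ≤ dist (cntVec ([] : List σ)) (cntVec y) + dist (cntVec y) (cntVec (b :: y)) :=
            dist_triangle _ _ _
        _ ≤ Real.sqrt 2 * ((levenshtein Levenshtein.defaultCost ([] : List σ) y : ℕ) : ℝ) + 1 := by
            gcongr
            · exact ih _ _ hy
            · rw [dist_eq_norm, cntVec_cons]
              simp [EuclideanSpace.norm_single]
        _ ≤ Real.sqrt 2 * ((levenshtein Levenshtein.defaultCost ([] : List σ) (b :: y) : ℕ) : ℝ) := by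
            rw [levenshtein_nil_cons]
            simp only [Levenshtein.defaultCost_insert]
            push_cast
            nlinarith [one_le_sqrt_two]
    · -- cons, nil
      have hx : x.length + ([] : List σ).length ≤ n := by
        simp only [List.length_nil, List.length_cons] at hn ⊢; omega
      calc dist (cntVec (a :: x)) (cntVec ([] : List σ))
          ≤ dist (cntVec (a :: x)) (cntVec x) + dist (cntVec x) (cntVec ([] : List σ)) :=
            dist_triangle _ _ _
        _ ≤ 1 + Real.sqrt 2 * ((levenshtein Levenshtein.defaultCost x ([] : List σ) : ℕ) : ℝ) := by
            gcongr
            · rw [dist_eq_norm, cntVec_cons]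
              simp [EuclideanSpace.norm_single]
            · exact ih _ _ hx
        _ ≤ Real.sqrt 2 * ((levenshtein Levenshtein.defaultCost (a :: x) ([] : List σ) : ℕ) : ℝ) := by
            rw [levenshtein_cons_nil]
            simp only [Levenshtein.defaultCost_delete]
            push_cast
            nlinarith [one_le_sqrt_two]
    · -- cons, cons
      have hlen : x.length + y.length + 1 ≤ n := by
        simp only [List.length_cons] at hn; omega
      rw [levenshtein_cons_cons]
      rcases min_cases (Levenshtein.defaultCost.delete a + levenshtein Levenshtein.defaultCost x (b :: y))
        (min (Levenshtein.defaultCost.insert b + levenshtein Levenshtein.defaultCost (a :: x) y)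
          (Levenshtein.defaultCost.substitute a b + levenshtein Levenshtein.defaultCost x y)) with
        ⟨heq, _⟩ | ⟨heq, _⟩
      · -- delete branch
        rw [heq]
        have hx : x.length + (b :: y).length ≤ n := by
          simp only [List.length_cons]; omega
        calc dist (cntVec (a :: x)) (cntVec (b :: y))
            ≤ dist (cntVec (a :: x)) (cntVec x) + dist (cntVec x) (cntVec (b :: y)) :=
              dist_triangle _ _ _
          _ ≤ 1 + Real.sqrt 2 * ((levenshtein Levenshtein.defaultCost x (b :: y) : ℕ) : ℝ) := by
              gcongr
              · rw [dist_eq_norm, cntVec_cons]; simp [EuclideanSpace.norm_single]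
              · exact ih _ _ hx
          _ ≤ _ := by
              simp only [Levenshtein.defaultCost_delete]
              push_cast
              nlinarith [one_le_sqrt_two]
      · rw [heq]
        rcases min_cases (Levenshtein.defaultCost.insert b + levenshtein Levenshtein.defaultCost (a :: x) y)
          (Levenshtein.defaultCost.substitute a b + levenshtein Levenshtein.defaultCost x y) with
          ⟨heq2, _⟩ | ⟨heq2, _⟩
        · -- insert branch
          rw [heq2]
          have hy : (a :: x).length + y.length ≤ n := by
            simp only [List.length_cons]; omega
          calc dist (cntVec (a :: x)) (cntVec (b :: y))
              ≤ dist (cntVec (a :: x)) (cntVec y) + dist (cntVec y) (cntVec (b :: y)) :=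
                dist_triangle _ _ _
            _ ≤ Real.sqrt 2 * ((levenshtein Levenshtein.defaultCost (a :: x) y : ℕ) : ℝ) + 1 := by
                gcongr
                · exact ih _ _ hy
                · rw [dist_eq_norm, cntVec_cons]; simp [EuclideanSpace.norm_single]
            _ ≤ _ := by
                simp only [Levenshtein.defaultCost_insert]
                push_cast
                nlinarith [one_le_sqrt_two]
        · -- substitute branch
          rw [heq2]
          have hxy : x.length + y.length ≤ n := by omega
          have hsub : dist (cntVec (a :: x)) (cntVec (b :: y))
              ≤ dist (cntVec x) (cntVec y) +
                ‖(EuclideanSpace.single a (1:ℝ) : EuclideanSpace ℝ σ) -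
                  EuclideanSpace.single b 1‖ := by
            rw [dist_eq_norm, dist_eq_norm, cntVec_cons, cntVec_cons]
            calc ‖cntVec x + EuclideanSpace.single a 1 - (cntVec y + EuclideanSpace.single b 1)‖
                = ‖(cntVec x - cntVec y) +
                    ((EuclideanSpace.single a (1:ℝ) : EuclideanSpace ℝ σ) -
                      EuclideanSpace.single b 1)‖ := by rw [add_sub_add_comm]
              _ ≤ _ := norm_add_le _ _
          by_cases hab : a = b
          · subst hab
            simp only [Levenshtein.defaultCost_substitute, if_pos rfl]
            calc dist (cntVec (a :: x)) (cntVec (a :: y))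
                ≤ dist (cntVec x) (cntVec y) + ‖(EuclideanSpace.single a (1:ℝ) :
                    EuclideanSpace ℝ σ) - EuclideanSpace.single a 1‖ := hsub
              _ = dist (cntVec x) (cntVec y) := by simp
              _ ≤ Real.sqrt 2 * ((levenshtein Levenshtein.defaultCost x y : ℕ) : ℝ) := ih _ _ hxy
              _ ≤ _ := by push_cast; nlinarith [one_le_sqrt_two]
          · simp only [Levenshtein.defaultCost_substitute, if_neg hab]
            calc dist (cntVec (a :: x)) (cntVec (b :: y))
                ≤ dist (cntVec x) (cntVec y) + ‖(EuclideanSpace.single a (1:ℝ) :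
                    EuclideanSpace ℝ σ) - EuclideanSpace.single b 1‖ := hsub
              _ ≤ Real.sqrt 2 * ((levenshtein Levenshtein.defaultCost x y : ℕ) : ℝ) + Real.sqrt 2 := by
                  gcongr
                  · exact ih _ _ hxy
                  · exact single_sub_single_norm a b
              _ ≤ _ := by push_cast; nlinarith [one_le_sqrt_two]

/-- If two words have Levenshtein distance exactly `d`, the Euclidean distance
between their bag-of-letters count vectors is at most `√2 * d`. -/
theorem levenshtein_bag_of_letters_bound {σ : Type*} [Fintype σ] [DecidableEq σ]
    (x y : List σ) (d : ℕ) (h : levenshtein Levenshtein.defaultCost x y = d) :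
    Real.sqrt (∑ a : σ, ((x.count a : ℝ) - (y.count a : ℝ)) ^ 2) ≤ Real.sqrt 2 * d := by
  have key := key_bound (x.length + y.length) x y le_rfl
  rw [h] at key
  have hd : dist (cntVec x) (cntVec y)
      = Real.sqrt (∑ a : σ, ((x.count a : ℝ) - (y.count a : ℝ)) ^ 2) := by
    rw [EuclideanSpace.dist_eq]
    congr 1
    apply Finset.sum_congr rfl
    intro a _
    rw [Real.dist_eq, sq_abs]
    rfl
  rw [hd] at key
  exact key
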